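/- The functions f(t) = (1 + 5t)^{3/5}, h(t) = (1 + 5t)^{−1/5}, k(t) = (1 + 5t)^{−2/5}, defined on the interval (−1/5, ∞), satisfy f(0) = h(0) = k(0) = 1 and, for all t ∈ (−1/5, ∞), the system of ordinary differential equations f′ = 2k + h / (k f), h′ = −h² / (k f²), k′ = −2 k² / f. -/

import Mathlib

open Set

/-- `f(t) = (1 + 5t)^{3/5}`. -/
noncomputable def fG2 (t : ℝ) : ℝ := (1 + 5 * t) ^ ((3 : ℝ)/5)

/-- `h(t) = (1 + 5t)^{-1/5}`. -/
noncomputable def hG2 (t : ℝ) : ℝ := (1 + 5 * t) ^ (-((1 : ℝ)/5))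

/-- `k(t) = (1 + 5t)^{-2/5}`. -/
noncomputable def kG2 (t : ℝ) : ℝ := (1 + 5 * t) ^ (-((2 : ℝ)/5))

lemma hasDerivAt_aux (p t : ℝ) (hu : 0 < 1 + 5 * t) :
    HasDerivAt (fun t : ℝ => (1 + 5 * t) ^ p) (5 * p * (1 + 5 * t) ^ (p - 1)) t := by
  have h1 : HasDerivAt (fun t : ℝ => 1 + 5 * t) 5 t := by
    simpa using ((hasDerivAt_id t).const_mul 5).const_add 1
  have h2 := (Real.hasDerivAt_rpow_const (p := p) (Or.inl hu.ne')).comp t h1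
  convert h2 using 1
  · rfl
  · rfl
  · rfl
  ring

theorem explicit_solution_hitchin_system_nilpotent :
    fG2 0 = 1 ∧ hG2 0 = 1 ∧ kG2 0 = 1 ∧
    ∀ t ∈ Ioi (-(1/5) : ℝ),
      HasDerivAt fG2 (2 * kG2 t + hG2 t / (kG2 t * fG2 t)) t ∧
      HasDerivAt hG2 (-(hG2 t ^ 2) / (kG2 t * fG2 t ^ 2)) t ∧
      HasDerivAt kG2 (-(2 * kG2 t ^ 2) / fG2 t) t := by
  refine ⟨by simp [fG2], by simp [hG2], by simp [kG2], fun t ht => ?_⟩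
  have hu : 0 < 1 + 5 * t := by
    have : -(1/5 : ℝ) < t := ht
    linarith
  have hpow : ∀ a b : ℝ, (1 + 5 * t) ^ a * (1 + 5 * t) ^ b = (1 + 5 * t) ^ (a + b) :=
    fun a b => (Real.rpow_add hu a b).symm
  have hdiv : ∀ a b : ℝ, (1 + 5 * t) ^ a / (1 + 5 * t) ^ b = (1 + 5 * t) ^ (a - b) :=
    fun a b => (Real.rpow_sub hu a b).symm
  refine ⟨?_, ?_, ?_⟩
  · convert hasDerivAt_aux ((3:ℝ)/5) t hu using 1
    · rfl
    simp only [fG2, hG2, kG2, sq]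
    rw [hpow, hdiv]
    norm_num
    ring
  · convert hasDerivAt_aux (-((1:ℝ)/5)) t hu using 1
    · rfl
    simp only [fG2, hG2, kG2, sq]
    rw [hpow, hpow, hpow, neg_div, hdiv]
    norm_num
  · convert hasDerivAt_aux (-((2:ℝ)/5)) t hu using 1
    · rfl
    simp only [fG2, hG2, kG2, sq]
    rw [hpow]
    rw [neg_div, mul_div_assoc, hdiv]
    norm_num
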